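/- Let N ≥ 1, let S be an invertible 2N×2N complex matrix, and set T = S⁻¹·Sᴴ. Suppose that no eigenvalue of T has modulus 1. Then, counting algebraic multiplicity, T has exactly N eigenvalues λ with |λ| < 1 and exactly N eigenvalues λ with |λ| > 1; equivalently, the multiset of roots of the characteristic polynomial of T contains exactly N elements of modulus strictly less than 1. -/

import Mathlib

open Matrix Polynomial

variable {n : ℕ}

private lemma det_map' {R S : Type*} [CommRing R] [CommRing S] (f : R →+* S)
    (A : Matrix (Fin n) (Fin n) R) : (A.map f).det = f A.det := by
  rw [RingHom.map_det, RingHom.mapMatrix_apply]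

private lemma mul_scalar' {R : Type*} [CommRing R] (A : Matrix (Fin n) (Fin n) R) (x : R) :
    A * scalar (Fin n) x = x • A := by
  ext i j
  simp [scalar_apply, mul_diagonal, Matrix.smul_apply, mul_comm]

private lemma aux_evalDet (T : Matrix (Fin n) (Fin n) ℂ) (y : ℂ) :
    T.charpoly.eval y = (y • (1 : Matrix (Fin n) (Fin n) ℂ) - T).det := by
  rw [Matrix.charpoly, ← coe_evalRingHom, RingHom.map_det]
  congr 1
  ext i j
  by_cases h : i = j
  · subst h; simp [charmatrix_apply_eq]
  · simp [charmatrix_apply_ne _ _ _ h, one_apply_ne h, h]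

private lemma aux_zero_not_root (T : Matrix (Fin n) (Fin n) ℂ) (hT : IsUnit T.det) :
    (0 : ℂ) ∉ T.charpoly.roots := by
  rw [mem_roots (T.charpoly_monic.ne_zero)]
  intro hc
  rw [IsRoot, aux_evalDet, zero_smul, zero_sub, det_neg, Fintype.card_fin] at hc
  rcases mul_eq_zero.mp hc with h | h
  · exact pow_ne_zero n (by norm_num : (-1:ℂ) ≠ 0) h
  · exact hT.ne_zero h

/-- Key multiset identity: conjugates of the eigenvalues of `T = S⁻¹ Sᴴ` coincide
(with multiplicity) with inverses of the eigenvalues. -/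
private lemma aux_key (S : Matrix (Fin n) (Fin n) ℂ) (hS : IsUnit S.det) :
    ((S⁻¹ * Sᴴ).charpoly.roots.map (starRingEnd ℂ)) =
      ((S⁻¹ * Sᴴ).charpoly.roots.map (·⁻¹)) := by
  classical
  set T := S⁻¹ * Sᴴ with hTdef
  set p := T.charpoly with hpdef
  set R := p.roots with hRdef
  have hSH : IsUnit (Sᴴ).det := by rw [det_conjTranspose]; exact hS.star
  have hSinv : IsUnit (S⁻¹).det := by
    rw [det_nonsing_inv]; rw [Ring.inverse_of_isUnit hS]; exact Units.isUnit _
  have hT : IsUnit T.det := by rw [hTdef, det_mul]; exact hSinv.mul hSH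
  have hST : S * T = Sᴴ := by
    rw [hTdef, ← mul_assoc, mul_nonsing_inv S hS, one_mul]
  have hmonic : p.Monic := T.charpoly_monic
  have hsplits : p.Splits := IsAlgClosed.splits p
  have hp : p = (R.map fun a => X - C a).prod :=
    hsplits.eq_prod_roots_of_monic hmonic
  have h0R : (0:ℂ) ∉ R := aux_zero_not_root T hT
  set P : ℂ[X] := ((X : ℂ[X]) • S.map C - Sᴴ.map C).det with hPdef
  set Q : ℂ[X] := ((X : ℂ[X]) • Sᴴ.map C - S.map C).det with hQdef
  -- Claim A : P = C S.det * p
  have hfacA : (X : ℂ[X]) • S.map C - Sᴴ.map C = S.map C * charmatrix T := by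
    rw [charmatrix, mul_sub, RingHom.mapMatrix_apply, ← Matrix.map_mul, hST, mul_scalar']
  have hA : P = C S.det * p := by
    rw [hPdef, hfacA, det_mul, _root_.det_map', hpdef, Matrix.charpoly]
  -- Claim B : Q = P.map conj
  have hB : P.map (starRingEnd ℂ) = Q := by
    rw [hPdef, ← coe_mapRingHom, RingHom.map_det]
    rw [hQdef, ← det_transpose ((X : ℂ[X]) • Sᴴ.map C - S.map C)]
    congr 1
    ext i j
    simp [conjTranspose_apply, map_C, RingHom.mapMatrix_apply, Matrix.map_apply,
      Matrix.smul_apply, transpose_apply]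
  -- Claim C : Q = C S.det * ∏ (C λ * X - 1)
  have hfacC : (X : ℂ[X]) • Sᴴ.map C - S.map C
      = S.map C * ((X : ℂ[X]) • T.map C - 1) := by
    rw [mul_sub, mul_one, Matrix.mul_smul, ← Matrix.map_mul, hST]
  have hg : (((X : ℂ[X]) • T.map C - 1) :
        Matrix (Fin n) (Fin n) ℂ[X]).det
      = (R.map fun l => C l * X - 1).prod := by
    apply eq_of_infinite_eval_eq
    apply Set.Infinite.mono (s := {(0:ℂ)}ᶜ)
    swap
    · exact (Set.finite_singleton 0).infinite_compl
    intro x hx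
    have hx0 : x ≠ 0 := hx
    have heval1 : Polynomial.eval x (((X : ℂ[X]) • T.map C - 1) :
        Matrix (Fin n) (Fin n) ℂ[X]).det = (x • T - 1).det := by
      rw [← coe_evalRingHom, RingHom.map_det]
      congr 1
      ext i j
      simp only [RingHom.mapMatrix_apply, Matrix.map_apply, Matrix.sub_apply, Matrix.smul_apply,
        smul_eq_mul, eval_sub, eval_mul, eval_X, eval_C, one_apply]
      by_cases h : i = j
      · subst h
        simp only [if_pos rfl, coe_evalRingHom, eval_sub, eval_mul, eval_X, eval_C,
          eval_one, if_true]
      · simp only [if_neg h, coe_evalRingHom, eval_sub, eval_mul, eval_X, eval_C, eval_zero]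
    have heval2 : Polynomial.eval x ((R.map fun l => C l * X - 1).prod)
        = (R.map fun l => l * x - 1).prod := by
      rw [eval_multiset_prod, Multiset.map_map]
      congr 1
      apply Multiset.map_congr rfl
      intro l _
      simp
    rw [Set.mem_setOf_eq, heval1, heval2]
    -- determinant computation
    have h1 : x • T - 1 = x • (T - x⁻¹ • (1 : Matrix (Fin n) (Fin n) ℂ)) := by
      rw [smul_sub, smul_smul, mul_inv_cancel₀ hx0, one_smul]
    have h2 : (T - x⁻¹ • (1 : Matrix (Fin n) (Fin n) ℂ))
        = -(x⁻¹ • (1 : Matrix (Fin n) (Fin n) ℂ) - T) := (neg_sub _ _).symm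
    rw [h1, det_smul, h2, det_neg, ← aux_evalDet, Fintype.card_fin]
    rw [← hpdef, hp, eval_multiset_prod, Multiset.map_map]
    have hR : (R.map fun l => l * x - 1) = R.map fun l => (-x) * (x⁻¹ - l) := by
      apply Multiset.map_congr rfl
      intro l _
      field_simp
      ring
    rw [hR]
    have := Multiset.prod_map_mul (m := R) (f := fun _ : ℂ => (-x)) (g := fun l => x⁻¹ - l)
    rw [this, Multiset.map_const', Multiset.prod_replicate]
    have hcardR : Multiset.card R = n := by
      rw [hRdef, (splits_iff_card_roots).mp hsplits, hpdef, charpoly_natDegree_eq_dim,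
        Fintype.card_fin]
    rw [hcardR, neg_pow]
    have hcomp : Multiset.map (eval x⁻¹ ∘ fun a => X - C a) R
        = Multiset.map (fun l => x⁻¹ - l) R :=
      Multiset.map_congr rfl (fun l _ => by simp)
    rw [hcomp]
    ring
  have hC : Q = C S.det * (R.map fun l => C l * X - 1).prod := by
    rw [hQdef, hfacC, det_mul, _root_.det_map', hg]
  -- roots of both sides
  have hdet0 : (S.det : ℂ) ≠ 0 := hS.ne_zero
  have hconjdet0 : (starRingEnd ℂ) S.det ≠ 0 := by
    simpa using hdet0
  have hroots1 : Q.roots = R.map (starRingEnd ℂ) := by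
    rw [← hB, hA, Polynomial.map_mul, map_C, roots_C_mul _ hconjdet0,
      hsplits.roots_map _]
  have hroots2 : Q.roots = R.map (·⁻¹) := by
    have hfactor : (R.map fun l => C l * X - 1) = R.map fun l => C l * (X - C l⁻¹) := by
      apply Multiset.map_congr rfl
      intro l hl
      have hl0 : l ≠ 0 := fun h => h0R (h ▸ hl)
      rw [mul_sub, ← C_mul, mul_inv_cancel₀ hl0, C_1]
    have hsplit2 : ((R.map fun l => C l * (X - C l⁻¹))).prod
        = C R.prod * ((R.map (·⁻¹)).map fun a => (X : ℂ[X]) - C a).prod := by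
      rw [Multiset.prod_map_mul (m := R) (f := fun l : ℂ => (C l : ℂ[X]))
        (g := fun l : ℂ => (X : ℂ[X]) - C l⁻¹), Multiset.map_map]
      congr 1
      exact (map_multiset_prod (C : ℂ →+* ℂ[X]) R).symm ▸ rfl
    have hprod0 : R.prod ≠ 0 := Multiset.prod_ne_zero h0R
    rw [hC, hfactor, hsplit2, ← mul_assoc, ← C_mul,
      roots_C_mul _ (mul_ne_zero hdet0 hprod0), roots_multiset_prod_X_sub_C]
  rw [← hroots1, hroots2]

open Matrix in
/-- If `S` is an invertible `2N×2N` complex matrix and no eigenvalue of `T = S⁻¹ Sᴴ` has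
modulus 1, then counting algebraic multiplicity `T` has exactly `N` eigenvalues of modulus `< 1`
and exactly `N` of modulus `> 1`. -/
theorem stmt_9 (N : ℕ) (hN : 1 ≤ N) (S : Matrix (Fin (2 * N)) (Fin (2 * N)) ℂ)
    (hS : IsUnit S.det)
    (hcirc : ∀ lam ∈ (S⁻¹ * Sᴴ).charpoly.roots, ‖lam‖ ≠ 1) :
    ((S⁻¹ * Sᴴ).charpoly.roots.filter (fun lam => ‖lam‖ < 1)).card = N ∧
    ((S⁻¹ * Sᴴ).charpoly.roots.filter (fun lam => 1 < ‖lam‖)).card = N := by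
  classical
  set T := S⁻¹ * Sᴴ with hTdef
  set R := T.charpoly.roots with hRdef
  have hSH : IsUnit (Sᴴ).det := by rw [det_conjTranspose]; exact hS.star
  have hSinv : IsUnit (S⁻¹).det := by
    rw [det_nonsing_inv]; rw [Ring.inverse_of_isUnit hS]; exact Units.isUnit _
  have hT : IsUnit T.det := by rw [hTdef, det_mul]; exact hSinv.mul hSH
  have h0R : (0:ℂ) ∉ R := aux_zero_not_root T hT
  have hkey : R.map (starRingEnd ℂ) = R.map (·⁻¹) := aux_key S hS
  have hcard : Multiset.card R = 2 * N := by
    rw [hRdef, (splits_iff_card_roots).mp (IsAlgClosed.splits T.charpoly),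
      charpoly_natDegree_eq_dim, Fintype.card_fin]
  -- counting
  have hlt : (R.map (starRingEnd ℂ)).countP (fun z => ‖z‖ < 1)
      = R.countP (fun z => ‖z‖ < 1) := by
    rw [Multiset.countP_map, ← Multiset.countP_eq_card_filter]
    apply Multiset.countP_congr rfl
    intro z _
    simp [Complex.norm_conj]
  have hgt : (R.map (·⁻¹)).countP (fun z => ‖z‖ < 1)
      = R.countP (fun z => 1 < ‖z‖) := by
    rw [Multiset.countP_map, ← Multiset.countP_eq_card_filter]
    apply Multiset.countP_congr rfl
    intro z hz
    have hz0 : z ≠ 0 := fun h => h0R (h ▸ hz)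
    have habs : 0 < ‖z‖ := norm_pos_iff.mpr hz0
    simp only [norm_inv, eq_iff_iff]
    exact inv_lt_one₀ habs
  have heq : R.countP (fun z => ‖z‖ < 1) = R.countP (fun z => 1 < ‖z‖) := by
    rw [← hlt, hkey, hgt]
  have hsum : R.countP (fun z => ‖z‖ < 1) + R.countP (fun z => 1 < ‖z‖)
      = 2 * N := by
    have hnot : R.countP (fun z => ¬ ‖z‖ < 1)
        = R.countP (fun z => 1 < ‖z‖) := by
      apply Multiset.countP_congr rfl
      intro z hz
      have hne : ‖z‖ ≠ 1 := hcirc z (hRdef ▸ hz)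
      simp only [eq_iff_iff, not_lt]
      exact ⟨fun h => lt_of_le_of_ne h (Ne.symm hne), le_of_lt⟩
    rw [← hnot, ← hcard, Multiset.countP_eq_card_filter, Multiset.countP_eq_card_filter,
      ← Multiset.card_add, Multiset.filter_add_not]
  rw [← Multiset.countP_eq_card_filter, ← Multiset.countP_eq_card_filter]
  omega
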